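/- For every integer s ≥ 2, every positive integer k, and every integer m ≥ s·k, every first-order sentence A in the language of rooted trees of quantifier depth at most k and alternating quantifier depth at most s-1 satisfies: A holds in T_1^{(s,k,m)} if and only if A holds in T_2^{(s,k,m)}. -/

import Mathlib

/-! ## Rooted trees -/

/-- A rooted tree structure: a vertex type, a root, and a parent map
(`parent v = none` is intended to hold exactly when `v` is the root). -/
structure RTree where
  V : Type
  root : V
  parent : V → Option V

namespace RTree

/-- Iterate the parent map `n` times. -/
def parentIter (T : RTree) : ℕ → T.V → Option T.V
  | 0, v => some v
  | n + 1, v => (T.parent v).bind (T.parentIter n)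

/-- `u` is a descendant of `v` (possibly `u = v`). -/
def IsDesc (T : RTree) (v u : T.V) : Prop :=
  ∃ n, T.parentIter n u = some v

/-- The structure is a genuine rooted, locally finite tree:
exactly the root has no parent, every vertex reaches the root by iterating
the parent map (connectivity and acyclicity), and every vertex has finitely
many children (local finiteness). -/
def IsTree (T : RTree) : Prop :=
  (∀ v, T.parent v = none ↔ v = T.root) ∧
  (∀ v, ∃ n, T.parentIter n v = some T.root) ∧
  (∀ v, {u | T.parent u = some v}.Finite)

open Classical in
/-- The subtree `T(v)` consisting of `v` and all its descendants, rooted at `v`. -/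
noncomputable def subtree (T : RTree) (v : T.V) : RTree where
  V := {u : T.V // T.IsDesc v u}
  root := ⟨v, 0, rfl⟩
  parent u :=
    if u.1 = v then none
    else (T.parent u.1).bind fun w =>
      if h : T.IsDesc v w then some ⟨w, h⟩ else none

end RTree

/-- An isomorphism of rooted trees: a bijection of vertices mapping root to
root and commuting with the parent maps. -/
structure TreeIso (S T : RTree) where
  toEquiv : S.V ≃ T.V
  map_root : toEquiv S.root = T.root
  map_parent : ∀ v, (S.parent v).map toEquiv = T.parent (toEquiv v)

/-! ## First-order logic of rooted trees -/

/-- Terms: variables (de Bruijn indices) and the constant `R` for the root. -/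
inductive FOTerm where
  | var : ℕ → FOTerm
  | root : FOTerm
deriving DecidableEq

/-- First-order formulas in the language of rooted trees: equality `x = y`,
the parent relation `parentOf t t'` (meaning `π(t') = t`, i.e. `t` is the
parent of `t'`), Boolean connectives, and quantifiers (de Bruijn style). -/
inductive FOFormula where
  | eq : FOTerm → FOTerm → FOFormula
  | parentOf : FOTerm → FOTerm → FOFormula
  | not : FOFormula → FOFormula
  | and : FOFormula → FOFormula → FOFormula
  | or : FOFormula → FOFormula → FOFormula
  | imp : FOFormula → FOFormula → FOFormula
  | all : FOFormula → FOFormula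
  | ex : FOFormula → FOFormula
deriving DecidableEq

namespace FOTerm

def eval (T : RTree) (env : ℕ → T.V) : FOTerm → T.V
  | var n => env n
  | root => T.root

def freeBound : FOTerm → ℕ
  | var n => n + 1
  | root => 0

end FOTerm

/-- Kinds of quantifiers, used to count alternations. -/
inductive QKind where
  | ex | all
deriving DecidableEq

/-- The dual of a quantifier kind. -/
def QKind.dual : QKind → QKind
  | .ex => .all
  | .all => .ex

namespace FOFormula

/-- Satisfaction of a formula in a rooted tree under an environment. -/
def Sat (T : RTree) : FOFormula → (ℕ → T.V) → Prop
  | eq t₁ t₂, env => t₁.eval T env = t₂.eval T env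
  | parentOf t₁ t₂, env => T.parent (t₂.eval T env) = some (t₁.eval T env)
  | not φ, env => ¬ φ.Sat T env
  | and φ ψ, env => φ.Sat T env ∧ ψ.Sat T env
  | or φ ψ, env => φ.Sat T env ∨ ψ.Sat T env
  | imp φ ψ, env => φ.Sat T env → ψ.Sat T env
  | all φ, env => ∀ w : T.V, φ.Sat T (fun n => match n with | 0 => w | Nat.succ k => env k)
  | ex φ, env => ∃ w : T.V, φ.Sat T (fun n => match n with | 0 => w | Nat.succ k => env k)

/-- Quantifier depth: the maximum number of nested quantifiers. -/
def qd : FOFormula → ℕ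
  | eq _ _ => 0
  | parentOf _ _ => 0
  | not φ => φ.qd
  | and φ ψ => max φ.qd ψ.qd
  | or φ ψ => max φ.qd ψ.qd
  | imp φ ψ => max φ.qd ψ.qd
  | all φ => φ.qd + 1
  | ex φ => φ.qd + 1

/-- Auxiliary alternation count: `aqdAux φ pol q` is the maximum number of
alternations between (effectively) existential and universal quantifiers along
a nested quantifier sequence of `φ`, given the current polarity `pol`
(`true` = positive; negations and antecedents of implications flip it, so that
e.g. a `∀` under a negation counts as an `∃`) and the effective kind `q` of
the innermost enclosing quantifier (if any). -/
def aqdAux : FOFormula → Bool → Option QKind → ℕ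
  | eq _ _, _, _ => 0
  | parentOf _ _, _, _ => 0
  | not φ, pol, q => φ.aqdAux (!pol) q
  | and φ ψ, pol, q => max (φ.aqdAux pol q) (ψ.aqdAux pol q)
  | or φ ψ, pol, q => max (φ.aqdAux pol q) (ψ.aqdAux pol q)
  | imp φ ψ, pol, q => max (φ.aqdAux (!pol) q) (ψ.aqdAux pol q)
  | all φ, pol, q =>
      (if q = some (if pol then QKind.ex else QKind.all) then 1 else 0) +
        φ.aqdAux pol (some (if pol then QKind.all else QKind.ex))
  | ex φ, pol, q =>
      (if q = some (if pol then QKind.all else QKind.ex) then 1 else 0) +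
        φ.aqdAux pol (some (if pol then QKind.ex else QKind.all))

/-- The number of alternations of quantifiers of a formula: the maximum number
of switches between (effectively) existential and universal quantifiers in a
nested quantifier sequence.  Purely existential or purely universal formulas
have `aqd = 0`. -/
def aqd (φ : FOFormula) : ℕ := φ.aqdAux true none

/-- A bound on the free variables of a formula: all free de Bruijn indices
are `< freeBound`. -/
def freeBound : FOFormula → ℕ
  | eq t₁ t₂ => max t₁.freeBound t₂.freeBound
  | parentOf t₁ t₂ => max t₁.freeBound t₂.freeBound
  | not φ => φ.freeBound
  | and φ ψ => max φ.freeBound ψ.freeBound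
  | or φ ψ => max φ.freeBound ψ.freeBound
  | imp φ ψ => max φ.freeBound ψ.freeBound
  | all φ => φ.freeBound - 1
  | ex φ => φ.freeBound - 1

/-- A sentence is a formula with no free variables. -/
def IsSentence (φ : FOFormula) : Prop := φ.freeBound = 0

end FOFormula

/-- A (closed) formula holds in a rooted tree. -/
def Models (T : RTree) (φ : FOFormula) : Prop :=
  φ.Sat T (fun _ => T.root)

/-- The formula `P_i(x)`, with free variable `x` being de Bruijn index `0`:
`P_0(x) = ∀ y ¬(π(y) = x)` and `P_{i+1}(x) = ∀ y (π(y) = x → ¬ P_i(y))`. -/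
def Pform : ℕ → FOFormula
  | 0 => .all (.not (.parentOf (.var 1) (.var 0)))
  | i + 1 => .all (.imp (.parentOf (.var 1) (.var 0)) (.not (Pform i)))

/-- The sentence `KEIN_i = P_i(R)`. -/
def KEIN : ℕ → FOFormula
  | 0 => .all (.not (.parentOf .root (.var 0)))
  | i + 1 => .all (.imp (.parentOf .root (.var 0)) (.not (Pform i)))

/-! ## Ehrenfeucht games -/

/-- The winning condition for Duplicator: for all pairs `(x_i, y_i)`, `(x_j, y_j)`
in the list of selected/designated pairs, (Main 1) `π(x_j) = x_i ↔ π(y_j) = y_i`,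
and (Main 2) `x_i = x_j ↔ y_i = y_j`. -/
def GoodPairs (T₁ T₂ : RTree) (ps : List (T₁.V × T₂.V)) : Prop :=
  ∀ p ∈ ps, ∀ q ∈ ps,
    (T₁.parent p.1 = some q.1 ↔ T₂.parent p.2 = some q.2) ∧
    (p.1 = q.1 ↔ p.2 = q.2)

/-- Duplicator wins the scheduled Ehrenfeucht game on `T₁, T₂` in which Spoiler
must play his moves in consecutive batches, the batch sizes given by the list
`sched`, switching trees after each batch; `side = true` means Spoiler currently
plays on `T₁` (Duplicator answering on `T₂`), `side = false` means Spoiler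
currently plays on `T₂`.  The list `ps` records the pairs selected so far
(including designated pairs and the pair of roots); Duplicator wins when the
final configuration satisfies `GoodPairs`. -/
def DupWinsSched (T₁ T₂ : RTree) : List ℕ → Bool → List (T₁.V × T₂.V) → Prop
  | [], _, ps => GoodPairs T₁ T₂ ps
  | 0 :: rest, side, ps => DupWinsSched T₁ T₂ rest (!side) ps
  | (n + 1) :: rest, side, ps =>
      if side then
        ∀ x : T₁.V, ∃ y : T₂.V, DupWinsSched T₁ T₂ (n :: rest) side ((x, y) :: ps)
      else
        ∀ y : T₂.V, ∃ x : T₁.V, DupWinsSched T₁ T₂ (n :: rest) side ((x, y) :: ps)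
termination_by sched _ _ => (sched.length, sched.sum)
decreasing_by
  all_goals
    first
      | exact Prod.Lex.left _ _ (Nat.lt_succ_self _)
      | exact Prod.Lex.right _ (by simp [List.sum_cons])

/-- The cost (in switches) for Spoiler of playing on side `side` when his
previous move (if any) was on side `last`. -/
def switchCost (last : Option Bool) (side : Bool) : ℕ :=
  match last with
  | none => 0
  | some b => if b = side then 0 else 1

/-- Duplicator wins the Ehrenfeucht game `EHR` with `rounds` remaining rounds,
`sw` remaining switches allowed to Spoiler, `last` the side on which Spoiler
made his previous move (if any), and `ps` the pairs selected so far.  In each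
round Spoiler picks a side (paying a switch if he changes trees, which he may
do only if he has switches left) and a vertex in that tree, and Duplicator
answers in the other tree. -/
def DupWinsEHRAux (T₁ T₂ : RTree) :
    ℕ → ℕ → Option Bool → List (T₁.V × T₂.V) → Prop
  | 0, _, _, ps => GoodPairs T₁ T₂ ps
  | r + 1, sw, last, ps =>
      ∀ side : Bool, switchCost last side ≤ sw →
        if side then
          ∀ x : T₁.V, ∃ y : T₂.V,
            DupWinsEHRAux T₁ T₂ r (sw - switchCost last side) (some side) ((x, y) :: ps)
        else
          ∀ y : T₂.V, ∃ x : T₁.V,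
            DupWinsEHRAux T₁ T₂ r (sw - switchCost last side) (some side) ((x, y) :: ps)

/-- Duplicator wins the game `EHR[T₁, T₂, s, r]`: `r` rounds, Spoiler may start
on either tree and make at most `s` switches. -/
def DupWinsEHR (T₁ T₂ : RTree) (s r : ℕ) : Prop :=
  DupWinsEHRAux T₁ T₂ r s none [(T₁.root, T₂.root)]

/-! ## The trees `T₁^{(s,k,m)}` and `T₂^{(s,k,m)}` -/

/-- The one-vertex rooted tree. -/
def single : RTree where
  V := PUnit
  root := PUnit.unit
  parent := fun _ => none

/-- Hang the trees `f 0, …, f (n-1)` from a new root: the root of each `f i`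
becomes a child of the new root. -/
def hang (n : ℕ) (f : Fin n → RTree) : RTree where
  V := Unit ⊕ (Σ i : Fin n, (f i).V)
  root := Sum.inl ()
  parent := fun x =>
    match x with
    | Sum.inl _ => none
    | Sum.inr ⟨i, w⟩ =>
      match (f i).parent w with
      | none => some (Sum.inl ())
      | some w' => some (Sum.inr ⟨i, w'⟩)

/-- The pair of trees `(T₁^{(s,k,m)}, T₂^{(s,k,m)})`, indexed by `s` (the
parameter `k` plays no role in the construction).  Conventions for `s = 0`:
`T₁^{(0)}` is a single vertex and `T₂^{(0)}` is a star of `m` childless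
children.  For `s ≥ 1`: in `T₁^{(s+1)}` the root has `m+1` children, from each
of which hangs a copy of `T₂^{(s)}`; in `T₂^{(s+1)}` the root has `m+1`
children, from `m` of which hangs a copy of `T₂^{(s)}` and from the remaining
one hangs a copy of `T₁^{(s)}`. -/
def TreePair (m : ℕ) : ℕ → RTree × RTree
  | 0 => (single, hang m fun _ => single)
  | s + 1 =>
      (hang (m + 1) fun _ => (TreePair m s).2,
       hang (m + 1) fun i => if i.1 = m then (TreePair m s).1 else (TreePair m s).2)

/-- The tree `T₁^{(s,k,m)}`. -/
def Tree1 (s k m : ℕ) : RTree := (TreePair m s).1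

/-- The tree `T₂^{(s,k,m)}`. -/
def Tree2 (s k m : ℕ) : RTree := (TreePair m s).2

section EHRBasic

variable {T₁ T₂ : RTree}

lemma goodPairs_cons {p : T₁.V × T₂.V} {ps} (h : GoodPairs T₁ T₂ (p :: ps)) :
    GoodPairs T₁ T₂ ps := fun a ha b hb =>
  h a (List.mem_cons_of_mem _ ha) b (List.mem_cons_of_mem _ hb)

lemma dupWins_zero {sw last ps} :
    DupWinsEHRAux T₁ T₂ 0 sw last ps ↔ GoodPairs T₁ T₂ ps := Iff.rfl

lemma dupWins_succ {r sw last ps} :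
    DupWinsEHRAux T₁ T₂ (r+1) sw last ps ↔
      ∀ side : Bool, switchCost last side ≤ sw →
        if side then
          ∀ x : T₁.V, ∃ y : T₂.V,
            DupWinsEHRAux T₁ T₂ r (sw - switchCost last side) (some side) ((x, y) :: ps)
        else
          ∀ y : T₂.V, ∃ x : T₁.V,
            DupWinsEHRAux T₁ T₂ r (sw - switchCost last side) (some side) ((x, y) :: ps) :=
  Iff.rfl

lemma dupWins_extract : ∀ (r sw : ℕ) (last : Option Bool) (ps : List (T₁.V × T₂.V)),
    ps ≠ [] → DupWinsEHRAux T₁ T₂ r sw last ps → GoodPairs T₁ T₂ ps := by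
  intro r
  induction r with
  | zero => intro sw last ps _ h; exact h
  | succ r ih =>
    intro sw last ps hne h
    obtain ⟨p, ps', rfl⟩ := List.exists_cons_of_ne_nil hne
    rw [dupWins_succ] at h
    rcases hb : (last.getD true) with _ | _
    · have h' := h false (by rcases last with _ | b <;> simp_all [switchCost])
      simp only [Bool.false_eq_true, if_false] at h'
      obtain ⟨x, hx⟩ := h' p.2
      exact goodPairs_cons (ih _ _ _ (by simp) hx)
    · have h' := h true (by rcases last with _ | b <;> simp_all [switchCost])
      simp only [reduceIte] at h'
      obtain ⟨y, hy⟩ := h' p.1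
      exact goodPairs_cons (ih _ _ _ (by simp) hy)

lemma goodPairs_swap {ps : List (T₁.V × T₂.V)} (h : GoodPairs T₁ T₂ ps) :
    GoodPairs T₂ T₁ (ps.map Prod.swap) := by
  intro p hp q hq
  obtain ⟨p₀, hp₀, rfl⟩ := List.mem_map.1 hp
  obtain ⟨q₀, hq₀, rfl⟩ := List.mem_map.1 hq
  obtain ⟨h1, h2⟩ := h p₀ hp₀ q₀ hq₀
  exact ⟨h1.symm, h2.symm⟩

lemma switchCost_not (last : Option Bool) (side : Bool) :
    switchCost (last.map (! ·)) side = switchCost last (! side) := by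
  rcases last with _ | b <;> rcases side <;> simp [switchCost] <;> rcases b <;> simp

lemma dupWins_swap : ∀ (r sw : ℕ) (last : Option Bool) (ps : List (T₁.V × T₂.V)),
    DupWinsEHRAux T₁ T₂ r sw last ps →
    DupWinsEHRAux T₂ T₁ r sw (last.map (! ·)) (ps.map Prod.swap) := by
  intro r
  induction r with
  | zero => intro sw last ps h; exact goodPairs_swap h
  | succ r ih =>
    intro sw last ps h side hcost
    rw [switchCost_not] at hcost
    have h' := h (! side) hcost
    rcases side
    · simp only [Bool.not_false, if_pos rfl] at h'
      simp only [Bool.false_eq_true, if_false]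
      intro y
      obtain ⟨x, hx⟩ := h' y
      exact ⟨x, by simpa [switchCost_not] using ih _ _ _ hx⟩
    · simp only [Bool.not_true, Bool.false_eq_true, if_false] at h'
      simp only [if_pos rfl]
      intro x
      obtain ⟨y, hy⟩ := h' x
      exact ⟨y, by simpa [switchCost_not] using ih _ _ _ hy⟩

end EHRBasic
section Transfer

/-- The effective quantifier kind corresponding to the side of Spoiler's
last move. -/
def lastK : Option Bool → Option QKind :=
  Option.map (fun b => if b then QKind.ex else QKind.all)

lemma lastK_cost (last : Option Bool) (side : Bool) :
    (if lastK last = some (if side then QKind.all else QKind.ex) then 1 else 0)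
      = switchCost last side := by
  rcases last with _ | b
  · simp [lastK, switchCost]
  · rcases b <;> rcases side <;> simp [lastK, switchCost]

lemma aqdAux_flip (φ : FOFormula) : ∀ (pol : Bool) (q : Option QKind),
    φ.aqdAux pol q = φ.aqdAux (! pol) (q.map QKind.dual) := by
  induction φ with
  | eq t₁ t₂ => intro pol q; rfl
  | parentOf t₁ t₂ => intro pol q; rfl
  | not φ ih => intro pol q; exact ih (! pol) q
  | and φ ψ ihφ ihψ =>
    intro pol q
    simp only [FOFormula.aqdAux]
    rw [ihφ pol q, ihψ pol q]
  | or φ ψ ihφ ihψ =>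
    intro pol q
    simp only [FOFormula.aqdAux]
    rw [ihφ pol q, ihψ pol q]
  | imp φ ψ ihφ ihψ =>
    intro pol q
    simp only [FOFormula.aqdAux]
    rw [ihφ (! pol) q, ihψ pol q]
  | all φ ih =>
    intro pol q
    simp only [FOFormula.aqdAux]
    rw [ih pol]
    cases pol <;> rcases q with _ | x <;> simp [QKind.dual] <;> rcases x <;>
      simp [QKind.dual]
  | ex φ ih =>
    intro pol q
    simp only [FOFormula.aqdAux]
    rw [ih pol]
    cases pol <;> rcases q with _ | x <;> simp [QKind.dual] <;> rcases x <;>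
      simp [QKind.dual]

lemma term_mem {T₁ T₂ : RTree} {ps : List (T₁.V × T₂.V)}
    (hroot : (T₁.root, T₂.root) ∈ ps) {env₁ : ℕ → T₁.V} {env₂ : ℕ → T₂.V}
    (henv : ∀ n, (env₁ n, env₂ n) ∈ ps) :
    ∀ t : FOTerm, (t.eval T₁ env₁, t.eval T₂ env₂) ∈ ps
  | .var n => henv n
  | .root => hroot

lemma game_transfer {T₁ T₂ : RTree} (φ : FOFormula) :
    ∀ (r sw : ℕ) (last : Option Bool) (ps : List (T₁.V × T₂.V))
      (env₁ : ℕ → T₁.V) (env₂ : ℕ → T₂.V) (pol : Bool),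
      DupWinsEHRAux T₁ T₂ r sw last ps →
      (T₁.root, T₂.root) ∈ ps →
      (∀ n, (env₁ n, env₂ n) ∈ ps) →
      φ.qd ≤ r → φ.aqdAux pol (lastK last) ≤ sw →
      (pol = true → φ.Sat T₁ env₁ → φ.Sat T₂ env₂) ∧
      (pol = false → φ.Sat T₂ env₂ → φ.Sat T₁ env₁) := by
  induction φ with
  | eq t₁ t₂ =>
    intro r sw last ps env₁ env₂ pol hg hroot henv _ _
    have good := dupWins_extract r sw last ps (List.ne_nil_of_mem hroot) hg
    have h2 := (good _ (term_mem hroot henv t₁) _ (term_mem hroot henv t₂)).2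
    exact ⟨fun _ => h2.mp, fun _ => h2.mpr⟩
  | parentOf t₁ t₂ =>
    intro r sw last ps env₁ env₂ pol hg hroot henv _ _
    have good := dupWins_extract r sw last ps (List.ne_nil_of_mem hroot) hg
    have h1 := (good _ (term_mem hroot henv t₂) _ (term_mem hroot henv t₁)).1
    exact ⟨fun _ => h1.mp, fun _ => h1.mpr⟩
  | not φ ih =>
    intro r sw last ps env₁ env₂ pol hg hroot henv hqd haqd
    have H := ih r sw last ps env₁ env₂ (! pol) hg hroot henv hqd haqd
    cases pol
    · exact ⟨(by simp), fun _ hs hs2 => hs (H.1 rfl hs2)⟩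
    · exact ⟨fun _ hs hs2 => hs (H.2 rfl hs2), (by simp)⟩
  | and φ ψ ihφ ihψ =>
    intro r sw last ps env₁ env₂ pol hg hroot henv hqd haqd
    simp only [FOFormula.qd, max_le_iff] at hqd
    simp only [FOFormula.aqdAux, max_le_iff] at haqd
    have Hφ := ihφ r sw last ps env₁ env₂ pol hg hroot henv hqd.1 haqd.1
    have Hψ := ihψ r sw last ps env₁ env₂ pol hg hroot henv hqd.2 haqd.2
    exact ⟨fun hp hs => ⟨Hφ.1 hp hs.1, Hψ.1 hp hs.2⟩,
           fun hp hs => ⟨Hφ.2 hp hs.1, Hψ.2 hp hs.2⟩⟩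
  | or φ ψ ihφ ihψ =>
    intro r sw last ps env₁ env₂ pol hg hroot henv hqd haqd
    simp only [FOFormula.qd, max_le_iff] at hqd
    simp only [FOFormula.aqdAux, max_le_iff] at haqd
    have Hφ := ihφ r sw last ps env₁ env₂ pol hg hroot henv hqd.1 haqd.1
    have Hψ := ihψ r sw last ps env₁ env₂ pol hg hroot henv hqd.2 haqd.2
    exact ⟨fun hp hs => hs.elim (fun h => Or.inl (Hφ.1 hp h)) (fun h => Or.inr (Hψ.1 hp h)),
           fun hp hs => hs.elim (fun h => Or.inl (Hφ.2 hp h)) (fun h => Or.inr (Hψ.2 hp h))⟩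
  | imp φ ψ ihφ ihψ =>
    intro r sw last ps env₁ env₂ pol hg hroot henv hqd haqd
    simp only [FOFormula.qd, max_le_iff] at hqd
    simp only [FOFormula.aqdAux, max_le_iff] at haqd
    have Hφ := ihφ r sw last ps env₁ env₂ (! pol) hg hroot henv hqd.1 haqd.1
    have Hψ := ihψ r sw last ps env₁ env₂ pol hg hroot henv hqd.2 haqd.2
    cases pol
    · exact ⟨(by simp),
        fun _ hs hφ1 => Hψ.2 rfl (hs (Hφ.1 rfl hφ1))⟩
    · exact ⟨fun _ hs hφ2 => Hψ.1 rfl (hs (Hφ.2 rfl hφ2)),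
        (by simp)⟩
  | ex φ ih =>
    intro r sw last ps env₁ env₂ pol hg hroot henv hqd haqd
    simp only [FOFormula.qd] at hqd
    obtain ⟨r', rfl⟩ : ∃ r', r = r' + 1 := ⟨r - 1, by omega⟩
    cases pol
    · -- pol = false : Sat T₂ → Sat T₁
      simp only [FOFormula.aqdAux] at haqd
      simp at haqd
      have hc := lastK_cost last false
      simp at hc
      have hcost : switchCost last false ≤ sw := by omega
      refine ⟨(by simp), fun _ hs => ?_⟩
      obtain ⟨w, hw⟩ := hs
      have hg' := hg false hcost
      simp only [Bool.false_eq_true, if_false] at hg'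
      obtain ⟨x, hx⟩ := hg' w
      have Hrec := ih r' (sw - switchCost last false) (some false) ((x, w) :: ps)
          (fun n => match n with | 0 => x | Nat.succ p => env₁ p)
          (fun n => match n with | 0 => w | Nat.succ p => env₂ p) false hx
          (List.mem_cons_of_mem _ hroot)
          (by intro n; cases n with
              | zero => exact List.mem_cons_self
              | succ p => exact List.mem_cons_of_mem _ (henv p))
          (by omega) (by show φ.aqdAux false (some QKind.all) ≤ _; omega)
      exact ⟨x, Hrec.2 rfl hw⟩
    · -- pol = true : Sat T₁ → Sat T₂
      simp only [FOFormula.aqdAux] at haqd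
      simp at haqd
      have hc := lastK_cost last true
      simp at hc
      have hcost : switchCost last true ≤ sw := by omega
      refine ⟨fun _ hs => ?_, (by simp)⟩
      obtain ⟨w, hw⟩ := hs
      have hg' := hg true hcost
      simp only [if_pos rfl] at hg'
      obtain ⟨y, hy⟩ := hg' w
      have Hrec := ih r' (sw - switchCost last true) (some true) ((w, y) :: ps)
          (fun n => match n with | 0 => w | Nat.succ p => env₁ p)
          (fun n => match n with | 0 => y | Nat.succ p => env₂ p) true hy
          (List.mem_cons_of_mem _ hroot)
          (by intro n; cases n with
              | zero => exact List.mem_cons_self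
              | succ p => exact List.mem_cons_of_mem _ (henv p))
          (by omega) (by show φ.aqdAux true (some QKind.ex) ≤ _; omega)
      exact ⟨y, Hrec.1 rfl hw⟩
  | all φ ih =>
    intro r sw last ps env₁ env₂ pol hg hroot henv hqd haqd
    simp only [FOFormula.qd] at hqd
    obtain ⟨r', rfl⟩ : ∃ r', r = r' + 1 := ⟨r - 1, by omega⟩
    cases pol
    · -- pol = false : Sat T₂ → Sat T₁
      simp only [FOFormula.aqdAux] at haqd
      simp at haqd
      have hc := lastK_cost last true
      simp at hc
      have hcost : switchCost last true ≤ sw := by omega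
      refine ⟨(by simp), fun _ hs => ?_⟩
      intro x
      have hg' := hg true hcost
      simp only [if_pos rfl] at hg'
      obtain ⟨y, hy⟩ := hg' x
      have Hrec := ih r' (sw - switchCost last true) (some true) ((x, y) :: ps)
          (fun n => match n with | 0 => x | Nat.succ p => env₁ p)
          (fun n => match n with | 0 => y | Nat.succ p => env₂ p) false hy
          (List.mem_cons_of_mem _ hroot)
          (by intro n; cases n with
              | zero => exact List.mem_cons_self
              | succ p => exact List.mem_cons_of_mem _ (henv p))
          (by omega) (by show φ.aqdAux false (some QKind.ex) ≤ _; omega)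
      exact Hrec.2 rfl (hs y)
    · -- pol = true : Sat T₁ → Sat T₂
      simp only [FOFormula.aqdAux] at haqd
      simp at haqd
      have hc := lastK_cost last false
      simp at hc
      have hcost : switchCost last false ≤ sw := by omega
      refine ⟨fun _ hs => ?_, (by simp)⟩
      intro w
      have hg' := hg false hcost
      simp only [Bool.false_eq_true, if_false] at hg'
      obtain ⟨x, hx⟩ := hg' w
      have Hrec := ih r' (sw - switchCost last false) (some false) ((x, w) :: ps)
          (fun n => match n with | 0 => x | Nat.succ p => env₁ p)
          (fun n => match n with | 0 => w | Nat.succ p => env₂ p) true hx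
          (List.mem_cons_of_mem _ hroot)
          (by intro n; cases n with
              | zero => exact List.mem_cons_self
              | succ p => exact List.mem_cons_of_mem _ (henv p))
          (by omega) (by show φ.aqdAux true (some QKind.all) ≤ _; omega)
      exact Hrec.1 rfl (hs x)

/-- If Duplicator wins `EHR[T₁,T₂,s,k]`, then sentences of quantifier depth
at most `k` and alternation number at most `s` do not distinguish the trees. -/
lemma ehr_to_equiv {T₁ T₂ : RTree} {s k : ℕ} (h : DupWinsEHR T₁ T₂ s k)
    (A : FOFormula) (hqd : A.qd ≤ k) (haqd : A.aqd ≤ s) :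
    Models T₁ A ↔ Models T₂ A := by
  have hroot : (T₁.root, T₂.root) ∈ [(T₁.root, T₂.root)] := List.mem_cons_self
  have henv : ∀ n : ℕ, ((fun _ => T₁.root) n, (fun _ => T₂.root) n) ∈
      [(T₁.root, T₂.root)] := fun _ => hroot
  constructor
  · intro hM
    exact (game_transfer A k s none _ (fun _ => T₁.root) (fun _ => T₂.root) true
      h hroot henv hqd haqd).1 rfl hM
  · intro hM
    have haqd' : A.aqdAux false (lastK none) ≤ s := by
      have := aqdAux_flip A true none
      simp only [Option.map_none] at this
      calc A.aqdAux false none = A.aqdAux true none := by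
            rw [this]; simp
        _ ≤ s := haqd
    exact (game_transfer A k s none _ (fun _ => T₁.root) (fun _ => T₂.root) false
      h hroot henv hqd haqd').2 rfl hM

end Transfer
section HangGame

open List

lemma goodPairs_rootpair {C D : RTree}
    (hC : ∀ v, C.parent v = none ↔ v = C.root)
    (hD : ∀ v, D.parent v = none ↔ v = D.root) :
    GoodPairs C D [(C.root, D.root)] := by
  intro p hp q hq
  simp only [List.mem_singleton] at hp hq
  subst hp; subst hq
  have h1 : C.parent C.root = none := (hC _).2 rfl
  have h2 : D.parent D.root = none := (hD _).2 rfl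
  simp [h1, h2]

lemma exists_fresh {n : ℕ} (l : List (Fin n)) (h : l.length + 1 ≤ n) :
    ∃ i : Fin n, i ∉ l := by
  by_contra hc
  push_neg at hc
  have hsub : (Finset.univ : Finset (Fin n)) ⊆ l.toFinset :=
    fun i _ => List.mem_toFinset.2 (hc i)
  have h1 : n ≤ l.toFinset.card := by simpa using Finset.card_le_card hsub
  have h2 : l.toFinset.card ≤ l.length := l.toFinset_card_le
  omega

variable {n : ℕ} {C D : RTree} {f g : Fin n → RTree} {j₀ : Fin n}

/-- The vertex of `hang n f` in branch `i` corresponding to `c : C.V`. -/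
def uX (isoF : ∀ i, TreeIso (f i) C) (i : Fin n) (c : C.V) : (hang n f).V :=
  Sum.inr ⟨i, (isoF i).toEquiv.symm c⟩

/-- The vertex of `hang n g` in regular branch `j ≠ j₀` corresponding to `c`. -/
def vReg (isoG : ∀ j, j ≠ j₀ → TreeIso (g j) C) (j : Fin n) (h : j ≠ j₀)
    (c : C.V) : (hang n g).V :=
  Sum.inr ⟨j, ((isoG j h).toEquiv.symm c)⟩

/-- The vertex of `hang n g` in the special branch `j₀` corresponding to `d`. -/
def vDef (isoG0 : TreeIso (g j₀) D) (d : D.V) : (hang n g).V :=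
  Sum.inr ⟨j₀, isoG0.toEquiv.symm d⟩

lemma hang_parent_inr (i : Fin n) (w : (f i).V) :
    (hang n f).parent (Sum.inr ⟨i, w⟩) =
      match (f i).parent w with
      | none => some (Sum.inl ())
      | some w' => some (Sum.inr ⟨i, w'⟩) := rfl

lemma hang_parent_iso {E : RTree} {i : Fin n} (e : TreeIso (f i) E) (c : E.V) :
    (hang n f).parent (Sum.inr ⟨i, e.toEquiv.symm c⟩) =
      (E.parent c).elim (some (Sum.inl ()))
        (fun c' => some (Sum.inr ⟨i, e.toEquiv.symm c'⟩)) := by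
  have hm := e.map_parent (e.toEquiv.symm c)
  rw [Equiv.apply_symm_apply] at hm
  rw [hang_parent_inr]
  rcases h : (f i).parent (e.toEquiv.symm c) with _ | w'
  · rw [h, Option.map_none] at hm
    rw [← hm]
    rfl
  · rw [h, Option.map_some] at hm
    rw [← hm]
    simp
    rfl

variable (isoF : ∀ i, TreeIso (f i) C) (isoG : ∀ j, j ≠ j₀ → TreeIso (g j) C)
  (isoG0 : TreeIso (g j₀) D)

lemma uX_inj {i i' : Fin n} {c c' : C.V} :
    uX isoF i c = uX isoF i' c' ↔ i = i' ∧ c = c' := by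
  unfold uX
  constructor
  · intro h
    obtain ⟨h1, h2⟩ := Sigma.mk.inj_iff.mp (Sum.inr.inj h)
    subst h1
    rw [heq_iff_eq] at h2
    exact ⟨rfl, by simpa using congrArg (isoF i).toEquiv h2⟩
  · rintro ⟨rfl, rfl⟩; rfl

lemma vReg_inj {j j' : Fin n} {h : j ≠ j₀} {h' : j' ≠ j₀} {c c' : C.V} :
    vReg isoG j h c = vReg isoG j' h' c' ↔ j = j' ∧ c = c' := by
  unfold vReg
  constructor
  · intro heq
    obtain ⟨h1, h2⟩ := Sigma.mk.inj_iff.mp (Sum.inr.inj heq)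
    subst h1
    rw [heq_iff_eq] at h2
    exact ⟨rfl, by simpa using congrArg (isoG j h).toEquiv h2⟩
  · rintro ⟨rfl, rfl⟩; rfl

lemma vDef_inj {d d' : D.V} :
    vDef isoG0 d = vDef isoG0 d' ↔ d = d' := by
  unfold vDef
  constructor
  · intro heq
    obtain ⟨-, h2⟩ := Sigma.mk.inj_iff.mp (Sum.inr.inj heq)
    rw [heq_iff_eq] at h2
    simpa using congrArg isoG0.toEquiv h2
  · rintro rfl; rfl

lemma vReg_ne_vDef {j : Fin n} {h : j ≠ j₀} {c : C.V} {d : D.V} :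
    vReg isoG j h c ≠ vDef isoG0 d := by
  unfold vReg vDef
  intro heq
  exact h (Sigma.mk.inj_iff.mp (Sum.inr.inj heq)).1

lemma uX_ne_root {i : Fin n} {c : C.V} : uX isoF i c ≠ (hang n f).root := by
  simp [uX, hang]

lemma vReg_ne_root {j : Fin n} {h : j ≠ j₀} {c : C.V} :
    vReg isoG j h c ≠ (hang n g).root := by
  simp [vReg, hang]

lemma vDef_ne_root {d : D.V} : vDef isoG0 d ≠ (hang n g).root := by
  simp [vDef, hang]

lemma hang_parent_hroot : (hang n f).parent ((hang n f).root) = none := rfl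

lemma pX_u_root (hC : ∀ v, C.parent v = none ↔ v = C.root) {i : Fin n} {c : C.V} :
    (hang n f).parent (uX isoF i c) = some (hang n f).root ↔ c = C.root := by
  rw [show uX isoF i c = Sum.inr ⟨i, (isoF i).toEquiv.symm c⟩ from rfl,
    hang_parent_iso (isoF i) c]
  rcases h : C.parent c with _ | c'
  · simp [Option.elim, hang, (hC c).1 h]
  · have : ¬ c = C.root := fun hc => by
      rw [hc, (hC C.root).2 rfl] at h; exact (nomatch h)
    simp [Option.elim, hang, this]

lemma pX_u_u {i i' : Fin n} {c c' : C.V} :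
    (hang n f).parent (uX isoF i c) = some (uX isoF i' c') ↔
      i = i' ∧ C.parent c = some c' := by
  rw [show uX isoF i c = Sum.inr ⟨i, (isoF i).toEquiv.symm c⟩ from rfl,
    hang_parent_iso (isoF i) c]
  rcases h : C.parent c with _ | c''
  · simp only [Option.elim, h]
    constructor
    · intro heq; exact absurd heq.symm (by intro h; cases h)
    · rintro ⟨-, heq⟩; exact nomatch heq
  · simp only [Option.elim, h, Option.some.injEq]
    rw [show (Sum.inr ⟨i, (isoF i).toEquiv.symm c''⟩ : (hang n f).V) = uX isoF i c''
      from rfl]; exact Option.some_inj.trans (uX_inj isoF)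

lemma pY_vReg_root (hC : ∀ v, C.parent v = none ↔ v = C.root) {j : Fin n} {h : j ≠ j₀} {c : C.V} :
    (hang n g).parent (vReg isoG j h c) = some (hang n g).root ↔ c = C.root := by
  rw [show vReg isoG j h c = Sum.inr ⟨j, ((isoG j h).toEquiv.symm c)⟩ from rfl,
    hang_parent_iso (isoG j h) c]
  rcases hp : C.parent c with _ | c'
  · simp [Option.elim, hang, (hC c).1 hp]
  · have : ¬ c = C.root := fun hc => by
      rw [hc, (hC C.root).2 rfl] at hp; exact (nomatch hp)
    simp [Option.elim, hang, this]

lemma pY_vDef_root (hD : ∀ v, D.parent v = none ↔ v = D.root) {d : D.V} :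
    (hang n g).parent (vDef isoG0 d) = some (hang n g).root ↔ d = D.root := by
  rw [show vDef isoG0 d = Sum.inr ⟨j₀, isoG0.toEquiv.symm d⟩ from rfl,
    hang_parent_iso isoG0 d]
  rcases hp : D.parent d with _ | d'
  · simp [Option.elim, hang, (hD d).1 hp]
  · have : ¬ d = D.root := fun hd => by
      rw [hd, (hD D.root).2 rfl] at hp; exact (nomatch hp)
    simp [Option.elim, hang, this]

lemma pY_vReg_vReg {j j' : Fin n} {h : j ≠ j₀} {h' : j' ≠ j₀} {c c' : C.V} :
    (hang n g).parent (vReg isoG j h c) = some (vReg isoG j' h' c') ↔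
      j = j' ∧ C.parent c = some c' := by
  rw [show vReg isoG j h c = Sum.inr ⟨j, ((isoG j h).toEquiv.symm c)⟩ from rfl,
    hang_parent_iso (isoG j h) c]
  rcases hp : C.parent c with _ | c''
  · simp only [Option.elim, hp]
    constructor
    · intro heq; exact absurd heq.symm (by intro h; cases h)
    · rintro ⟨-, heq⟩; exact nomatch heq
  · simp only [Option.elim, hp, Option.some.injEq]
    rw [show (Sum.inr ⟨j, ((isoG j h).toEquiv.symm c'')⟩ : (hang n g).V) =
      vReg isoG j h c'' from rfl]; exact Option.some_inj.trans (vReg_inj isoG)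

lemma pY_vDef_vDef {d d' : D.V} :
    (hang n g).parent (vDef isoG0 d) = some (vDef isoG0 d') ↔
      D.parent d = some d' := by
  rw [show vDef isoG0 d = Sum.inr ⟨j₀, isoG0.toEquiv.symm d⟩ from rfl,
    hang_parent_iso isoG0 d]
  rcases hp : D.parent d with _ | d''
  · simp only [Option.elim, hp]
    constructor
    · intro heq; exact absurd heq.symm (by intro h; cases h)
    · intro heq; exact nomatch heq
  · simp only [Option.elim, hp, Option.some.injEq]
    rw [show (Sum.inr ⟨j₀, isoG0.toEquiv.symm d''⟩ : (hang n g).V) =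
      vDef isoG0 d'' from rfl]; exact Option.some_inj.trans (vDef_inj isoG0)

lemma pY_vReg_vDef {j : Fin n} {h : j ≠ j₀} {c : C.V} {d : D.V} :
    ¬ (hang n g).parent (vReg isoG j h c) = some (vDef isoG0 d) := by
  rw [show vReg isoG j h c = Sum.inr ⟨j, ((isoG j h).toEquiv.symm c)⟩ from rfl,
    hang_parent_iso (isoG j h) c]
  rcases hp : C.parent c with _ | c'
  · simp only [Option.elim]
    intro heq
    exact absurd heq.symm (by intro h; cases h)
  · simp only [Option.elim, Option.some.injEq]
    intro heq
    rw [show vDef isoG0 d = Sum.inr ⟨j₀, isoG0.toEquiv.symm d⟩ from rfl] at heq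
    exact h (Sigma.mk.inj_iff.mp (Sum.inr.inj (Option.some.inj heq))).1

lemma pY_vDef_vReg {j : Fin n} {h : j ≠ j₀} {c : C.V} {d : D.V} :
    ¬ (hang n g).parent (vDef isoG0 d) = some (vReg isoG j h c) := by
  rw [show vDef isoG0 d = Sum.inr ⟨j₀, isoG0.toEquiv.symm d⟩ from rfl,
    hang_parent_iso isoG0 d]
  rcases hp : D.parent d with _ | d'
  · simp only [Option.elim]
    intro heq
    exact absurd heq.symm (by intro h; cases h)
  · simp only [Option.elim, Option.some.injEq]
    intro heq
    rw [show vReg isoG j h c = Sum.inr ⟨j, ((isoG j h).toEquiv.symm c)⟩ from rfl] at heq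
    exact h (Sigma.mk.inj_iff.mp (Sum.inr.inj (Option.some.inj heq))).1.symm

/-- Description of the pairs that can occur in a play maintained by Duplicator. -/
def Descr (M : List (Fin n × Fin n)) (df : Option (Fin n))
    (inn : List (C.V × D.V)) (p : (hang n f).V × (hang n g).V) : Prop :=
  p = ((hang n f).root, (hang n g).root)
  ∨ (∃ a ∈ M, ∃ c : C.V, ∃ h : a.2 ≠ j₀, p = (uX isoF a.1 c, vReg isoG a.2 h c))
  ∨ (∃ i₀, df = some i₀ ∧ ∃ cd ∈ inn, p = (uX isoF i₀ cd.1, vDef isoG0 cd.2))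

lemma configGood
    (hC : ∀ v, C.parent v = none ↔ v = C.root)
    (hD : ∀ v, D.parent v = none ↔ v = D.root)
    {M : List (Fin n × Fin n)} {df : Option (Fin n)} {inn : List (C.V × D.V)}
    (hM : ∀ a ∈ M, ∀ b ∈ M, (a.1 = b.1 ↔ a.2 = b.2))
    (hdf : ∀ i₀, df = some i₀ → ∀ a ∈ M, a.1 ≠ i₀)
    (hinn : GoodPairs C D (inn ++ [(C.root, D.root)]))
    {ps : List ((hang n f).V × (hang n g).V)}
    (hps : ∀ p ∈ ps, Descr isoF isoG isoG0 M df inn p) :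
    GoodPairs (hang n f) (hang n g) ps := by
  have rfX : (hang n f).parent (hang n f).root = none := rfl
  have rfY : (hang n g).parent (hang n g).root = none := rfl
  intro p hp q hq
  rcases hps p hp with hp1 | ⟨a, ha, c, hja, hp2⟩ | ⟨i₀, hdf0, cd, hcd, hp3⟩ <;>
    rcases hps q hq with hq1 | ⟨b, hb, c', hjb, hq2⟩ | ⟨i₁, hdf1, cd', hcd', hq3⟩
  -- root / root
  · subst hp1; subst hq1
    refine ⟨?_, ?_⟩ <;> simp [rfX, rfY]
  -- root / regular
  · subst hp1; subst hq2
    refine ⟨?_, ?_⟩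
    · rw [rfX, rfY]; simp
    · constructor
      · intro h; exact absurd h.symm (uX_ne_root isoF)
      · intro h; exact absurd h.symm (vReg_ne_root isoG)
  -- root / defect
  · subst hp1; subst hq3
    refine ⟨?_, ?_⟩
    · rw [rfX, rfY]; simp
    · constructor
      · intro h; exact absurd h.symm (uX_ne_root isoF)
      · intro h; exact absurd h.symm (vDef_ne_root isoG0)
  -- regular / root
  · subst hp2; subst hq1
    refine ⟨?_, ?_⟩
    · rw [pX_u_root isoF hC, pY_vReg_root isoG hC]
    · constructor
      · intro h; exact absurd h (uX_ne_root isoF)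
      · intro h; exact absurd h (vReg_ne_root isoG)
  -- regular / regular
  · subst hp2; subst hq2
    refine ⟨?_, ?_⟩
    · rw [pX_u_u isoF, pY_vReg_vReg isoG]
      exact and_congr (hM a ha b hb) Iff.rfl
    · rw [uX_inj isoF, vReg_inj isoG]
      exact and_congr (hM a ha b hb) Iff.rfl
  -- regular / defect
  · subst hp2; subst hq3
    have hne : a.1 ≠ i₁ := hdf i₁ hdf1 a ha
    refine ⟨?_, ?_⟩
    · rw [pX_u_u isoF]
      constructor
      · rintro ⟨h1, -⟩; exact absurd h1 hne
      · intro h; exact absurd h (pY_vReg_vDef isoG isoG0)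
    · rw [uX_inj isoF]
      constructor
      · rintro ⟨h1, -⟩; exact absurd h1 hne
      · intro h; exact absurd h (vReg_ne_vDef isoG isoG0)
  -- defect / root
  · subst hp3; subst hq1
    have hio := (hinn cd (List.mem_append_left _ hcd) (C.root, D.root)
      (List.mem_append_right _ (List.mem_singleton_self _))).2
    refine ⟨?_, ?_⟩
    · rw [pX_u_root isoF hC, pY_vDef_root isoG0 hD]
      exact hio
    · constructor
      · intro h; exact absurd h (uX_ne_root isoF)
      · intro h; exact absurd h (vDef_ne_root isoG0)
  -- defect / regular
  · subst hp3; subst hq2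
    have hne : i₀ ≠ b.1 := (hdf i₀ hdf0 b hb).symm
    refine ⟨?_, ?_⟩
    · rw [pX_u_u isoF]
      constructor
      · rintro ⟨h1, -⟩; exact absurd h1 hne
      · intro h; exact absurd h (pY_vDef_vReg isoG isoG0)
    · rw [uX_inj isoF]
      constructor
      · rintro ⟨h1, -⟩; exact absurd h1 hne
      · intro h; exact absurd h.symm (vReg_ne_vDef isoG isoG0)
  -- defect / defect
  · subst hp3; subst hq3
    rw [hdf0] at hdf1
    have hii : i₀ = i₁ := by injection hdf1
    subst hii
    have hgood := hinn cd (List.mem_append_left _ hcd) cd'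
      (List.mem_append_left _ hcd')
    refine ⟨?_, ?_⟩
    · rw [pX_u_u isoF, pY_vDef_vDef isoG0]
      simpa using hgood.1
    · rw [uX_inj isoF, vDef_inj isoG0]
      simpa using hgood.2

lemma descr_mono_inn {M : List (Fin n × Fin n)} {df : Option (Fin n)}
    {inn : List (C.V × D.V)} {cd : C.V × D.V} {p}
    (h : Descr isoF isoG isoG0 M df inn p) :
    Descr isoF isoG isoG0 M df (cd :: inn) p := by
  rcases h with h | h | ⟨i₀, h1, cd', h2, h3⟩
  · exact Or.inl h
  · exact Or.inr (Or.inl h)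
  · exact Or.inr (Or.inr ⟨i₀, h1, cd', List.mem_cons_of_mem _ h2, h3⟩)

lemma descr_mono_M {M : List (Fin n × Fin n)} {df : Option (Fin n)}
    {inn : List (C.V × D.V)} {a : Fin n × Fin n} {p}
    (h : Descr isoF isoG isoG0 M df inn p) :
    Descr isoF isoG isoG0 (a :: M) df inn p := by
  rcases h with h | ⟨b, hb, c, hc, h3⟩ | h
  · exact Or.inl h
  · exact Or.inr (Or.inl ⟨b, List.mem_cons_of_mem _ hb, c, hc, h3⟩)
  · exact Or.inr (Or.inr h)

lemma descr_create {M : List (Fin n × Fin n)}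
    {inn inn' : List (C.V × D.V)} {i₀ : Fin n} {p}
    (h : Descr isoF isoG isoG0 M none inn p) :
    Descr isoF isoG isoG0 M (some i₀) inn' p := by
  rcases h with h | h | ⟨i₁, h1, -⟩
  · exact Or.inl h
  · exact Or.inr (Or.inl h)
  · exact absurd h1 (by simp)

lemma reserve_pres {sw σc : ℕ} {last : Option Bool} {side : Bool}
    (h : sw - switchCost last false ≤ σc) :
    (sw - switchCost last side) - switchCost (some side) false ≤ σc := by
  rcases last with _ | a
  · rcases side <;> simp [switchCost] at * <;> omega
  · rcases a <;> rcases side <;> simp [switchCost] at * <;> omega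

lemma P_pres {sw sw_i : ℕ} {a b side : Bool}
    (hc : switchCost (some a) side ≤ sw)
    (hP : (a = b ∧ sw ≤ sw_i) ∨ sw + 1 ≤ sw_i) :
    ((side = b ∧ sw - switchCost (some a) side ≤ sw_i) ∨
      (sw - switchCost (some a) side) + 1 ≤ sw_i) := by
  rcases a <;> rcases b <;> rcases side <;> simp [switchCost] at * <;> omega

lemma P_inner {sw sw_i : ℕ} {a b side : Bool}
    (hc : switchCost (some a) side ≤ sw)
    (hP : (a = b ∧ sw ≤ sw_i) ∨ sw + 1 ≤ sw_i) :
    switchCost (some b) side ≤ sw_i ∧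
      sw - switchCost (some a) side ≤ sw_i - switchCost (some b) side := by
  rcases a <;> rcases b <;> rcases side <;> simp [switchCost] at * <;> omega

theorem hang_main
    (hC : ∀ v, C.parent v = none ↔ v = C.root)
    (hD : ∀ v, D.parent v = none ↔ v = D.root) (σc : ℕ) :
    ∀ (r sw : ℕ) (last : Option Bool) (M : List (Fin n × Fin n))
      (df : Option (Fin n)) (inn : List (C.V × D.V))
      (ps : List ((hang n f).V × (hang n g).V)),
      (∀ r' ≤ r, DupWinsEHRAux C D r' σc (some false) [(C.root, D.root)]) →
      (∀ p ∈ ps, Descr isoF isoG isoG0 M df inn p) →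
      (∀ a ∈ M, ∀ b ∈ M, (a.1 = b.1 ↔ a.2 = b.2)) →
      (∀ a ∈ M, a.2 ≠ j₀) →
      (∀ i₀, df = some i₀ → ∀ a ∈ M, a.1 ≠ i₀) →
      M.length + (if df.isSome then 1 else 0) + r + 1 ≤ n →
      (df = none → inn = [] ∧ sw - switchCost last false ≤ σc) →
      (∀ i₀, df = some i₀ →
        ∃ (r_i sw_i : ℕ) (a b : Bool), r ≤ r_i ∧ last = some a ∧
          DupWinsEHRAux C D r_i sw_i (some b) (inn ++ [(C.root, D.root)]) ∧
          ((a = b ∧ sw ≤ sw_i) ∨ sw + 1 ≤ sw_i)) →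
      DupWinsEHRAux (hang n f) (hang n g) r sw last ps := by
  intro r
  induction r with
  | zero =>
    intro sw last M df inn ps hIN hps hM hMj hdf hcount hnone hsome
    rcases hdfc : df with _ | i₀
    · subst hdfc
      obtain ⟨rfl, -⟩ := hnone rfl
      exact configGood isoF isoG isoG0 hC hD hM hdf
        (by simpa using goodPairs_rootpair hC hD) hps
    · subst hdfc
      obtain ⟨r_i, sw_i, a, b, -, -, hgame, -⟩ := hsome i₀ rfl
      exact configGood isoF isoG isoG0 hC hD hM hdf
        (dupWins_extract _ _ _ _ (by simp) hgame) hps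
  | succ r ih =>
    intro sw last M df inn ps hIN hps hM hMj hdf hcount hnone hsome
    intro side hcost
    rcases side
    · -- Spoiler plays in the second tree `hang n g`
      simp only [Bool.false_eq_true, if_false]
      intro y
      rcases y with ⟨⟩ | ⟨j, w⟩
      · -- the root
        refine ⟨(hang n f).root, ?_⟩
        refine ih (sw - switchCost last false) (some false) M df inn _
          (fun r' hr' => hIN r' (by omega)) ?_ hM hMj hdf
          (by rcases df <;> simp at hcount ⊢ <;> omega) ?_ ?_
        · intro p hp
          rcases List.mem_cons.1 hp with rfl | hp
          · exact Or.inl rfl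
          · exact hps p hp
        · intro h
          obtain ⟨h1, h2⟩ := hnone h
          exact ⟨h1, reserve_pres h2⟩
        · intro i₀ h
          obtain ⟨r_i, sw_i, aa, bb, hri, hlast, hgame, hP⟩ := hsome i₀ h
          subst hlast
          exact ⟨r_i, sw_i, false, bb, by omega, rfl, hgame, P_pres hcost hP⟩
      · -- a vertex in branch j
        by_cases hj0 : j = j₀
        · subst hj0
          rcases hdfc : df with _ | i₀
          · -- create the defect
            subst hdfc
            obtain ⟨rfl, hres⟩ := hnone rfl
            obtain ⟨ifr, hifr⟩ := exists_fresh (M.map Prod.fst)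
              (by simp at hcount ⊢; omega)
            have hstep := hIN (r + 1) le_rfl false (by simp [switchCost])
            simp only [Bool.false_eq_true, if_false] at hstep
            obtain ⟨cc, hcc⟩ := hstep (isoG0.toEquiv w)
            refine ⟨uX isoF ifr cc, ?_⟩
            refine ih (sw - switchCost last false) (some false) M (some ifr)
              [(cc, isoG0.toEquiv w)] _
              (fun r' hr' => hIN r' (by omega)) ?_ hM hMj ?_
              (by simp at hcount ⊢; omega) (by intro h; exact absurd h (by simp)) ?_
            · intro p hp
              rcases List.mem_cons.1 hp with rfl | hp
              · refine Or.inr (Or.inr ⟨ifr, rfl, (cc, isoG0.toEquiv w),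
                  List.mem_singleton_self _, ?_⟩)
                simp [vDef]
              · exact descr_create isoF isoG isoG0 (hps p hp)
            · intro i₀' h a ha
              obtain rfl : ifr = i₀' := Option.some.inj h
              intro hcontra
              exact hifr (hcontra ▸ List.mem_map_of_mem (f := Prod.fst) ha)
            · intro i₀' h
              obtain rfl : ifr = i₀' := Option.some.inj h
              refine ⟨r, σc, false, false, le_rfl, rfl, hcc, Or.inl ⟨rfl, ?_⟩⟩
              simpa using hres
          · -- play inside the existing defect
            subst hdfc
            obtain ⟨r_i, sw_i, aa, bb, hri, hlast, hgame, hP⟩ := hsome i₀ rfl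
            subst hlast
            obtain ⟨r_i', rfl⟩ : ∃ t, r_i = t + 1 := ⟨r_i - 1, by omega⟩
            have hPI := P_inner (side := false) hcost hP
            have hstep := hgame false hPI.1
            simp only [Bool.false_eq_true, if_false] at hstep
            obtain ⟨cc, hcc⟩ := hstep (isoG0.toEquiv w)
            refine ⟨uX isoF i₀ cc, ?_⟩
            refine ih (sw - switchCost (some aa) false) (some false) M (some i₀)
              ((cc, isoG0.toEquiv w) :: inn) _
              (fun r' hr' => hIN r' (by omega)) ?_ hM hMj hdf
              (by simp at hcount ⊢; omega) (by intro h; exact absurd h (by simp)) ?_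
            · intro p hp
              rcases List.mem_cons.1 hp with rfl | hp
              · refine Or.inr (Or.inr ⟨i₀, rfl, (cc, isoG0.toEquiv w),
                  List.mem_cons_self, ?_⟩)
                simp [vDef]
              · exact descr_mono_inn isoF isoG isoG0 (hps p hp)
            · intro i₀' h
              obtain rfl : i₀ = i₀' := Option.some.inj h
              exact ⟨r_i', sw_i - switchCost (some bb) false, false, false,
                by omega, rfl, hcc, Or.inl ⟨rfl, hPI.2⟩⟩
        · -- a regular branch of `hang n g`
          by_cases hmem : ∃ a ∈ M, a.2 = j
          · obtain ⟨a, ha, haj⟩ := hmem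
            subst haj
            refine ⟨uX isoF a.1 ((isoG a.2 hj0).toEquiv w), ?_⟩
            refine ih (sw - switchCost last false) (some false) M df inn _
              (fun r' hr' => hIN r' (by omega)) ?_ hM hMj hdf
              (by rcases df <;> simp at hcount ⊢ <;> omega) ?_ ?_
            · intro p hp
              rcases List.mem_cons.1 hp with rfl | hp
              · refine Or.inr (Or.inl ⟨a, ha, (isoG a.2 hj0).toEquiv w, hj0, ?_⟩)
                simp [vReg]
              · exact hps p hp
            · intro h
              obtain ⟨h1, h2⟩ := hnone h
              exact ⟨h1, reserve_pres h2⟩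
            · intro i₀ h
              obtain ⟨r_i, sw_i, aa, bb, hri, hlast, hgame, hP⟩ := hsome i₀ h
              subst hlast
              exact ⟨r_i, sw_i, false, bb, by omega, rfl, hgame, P_pres hcost hP⟩
          · obtain ⟨ifr, hifr⟩ := exists_fresh (df.toList ++ M.map Prod.fst)
              (by rcases df <;> simp at hcount ⊢ <;> omega)
            refine ⟨uX isoF ifr ((isoG j hj0).toEquiv w), ?_⟩
            refine ih (sw - switchCost last false) (some false) ((ifr, j) :: M) df inn _
              (fun r' hr' => hIN r' (by omega)) ?_ ?_ ?_ ?_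
              (by rcases df <;> simp at hcount ⊢ <;> omega) ?_ ?_
            · intro p hp
              rcases List.mem_cons.1 hp with rfl | hp
              · refine Or.inr (Or.inl ⟨(ifr, j), List.mem_cons_self,
                  (isoG j hj0).toEquiv w, hj0, ?_⟩)
                simp [vReg]
              · exact descr_mono_M isoF isoG isoG0 (hps p hp)
            · -- partial bijection
              intro a ha b hb
              rcases List.mem_cons.1 ha with rfl | ha <;>
                rcases List.mem_cons.1 hb with rfl | hb
              · simp
              · constructor
                · intro h1
                  refine absurd ?_ (fun hc => hifr (List.mem_append_right _ hc))
                  rw [show ifr = b.1 from h1]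
                  exact List.mem_map_of_mem (f := Prod.fst) hb
                · intro h2
                  exact absurd ⟨b, hb, h2.symm⟩ hmem
              · constructor
                · intro h1
                  refine absurd ?_ (fun hc => hifr (List.mem_append_right _ hc))
                  rw [show ifr = a.1 from h1.symm]
                  exact List.mem_map_of_mem (f := Prod.fst) ha
                · intro h2
                  exact absurd ⟨a, ha, h2⟩ hmem
              · exact hM a ha b hb
            · intro a ha
              rcases List.mem_cons.1 ha with rfl | ha
              · exact hj0
              · exact hMj a ha
            · intro i₀ h a ha
              rcases List.mem_cons.1 ha with rfl | ha
              · intro hcontra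
                refine hifr (List.mem_append_left _ ?_)
                rw [h, show ifr = i₀ from hcontra]
                simp
              · exact hdf i₀ h a ha
            · intro h
              obtain ⟨h1, h2⟩ := hnone h
              exact ⟨h1, reserve_pres h2⟩
            · intro i₀ h
              obtain ⟨r_i, sw_i, aa, bb, hri, hlast, hgame, hP⟩ := hsome i₀ h
              subst hlast
              exact ⟨r_i, sw_i, false, bb, by omega, rfl, hgame, P_pres hcost hP⟩
    · -- Spoiler plays in the first tree `hang n f`
      simp only [if_pos rfl]
      intro x
      rcases x with ⟨⟩ | ⟨i, w⟩
      · refine ⟨(hang n g).root, ?_⟩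
        refine ih (sw - switchCost last true) (some true) M df inn _
          (fun r' hr' => hIN r' (by omega)) ?_ hM hMj hdf
          (by rcases df <;> simp at hcount ⊢ <;> omega) ?_ ?_
        · intro p hp
          rcases List.mem_cons.1 hp with rfl | hp
          · exact Or.inl rfl
          · exact hps p hp
        · intro h
          obtain ⟨h1, h2⟩ := hnone h
          exact ⟨h1, reserve_pres h2⟩
        · intro i₀ h
          obtain ⟨r_i, sw_i, aa, bb, hri, hlast, hgame, hP⟩ := hsome i₀ h
          subst hlast
          exact ⟨r_i, sw_i, true, bb, by omega, rfl, hgame, P_pres hcost hP⟩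
      · by_cases hdd : ∃ i₀, df = some i₀ ∧ i = i₀
        · -- play inside the existing defect
          obtain ⟨i₀, hdfc, rfl⟩ := hdd
          subst hdfc
          obtain ⟨r_i, sw_i, aa, bb, hri, hlast, hgame, hP⟩ := hsome i rfl
          subst hlast
          obtain ⟨r_i', rfl⟩ : ∃ t, r_i = t + 1 := ⟨r_i - 1, by omega⟩
          have hPI := P_inner (side := true) hcost hP
          have hstep := hgame true hPI.1
          simp only [if_pos rfl] at hstep
          obtain ⟨dd, hdd2⟩ := hstep ((isoF i).toEquiv w)
          refine ⟨vDef isoG0 dd, ?_⟩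
          refine ih (sw - switchCost (some aa) true) (some true) M (some i)
              (((isoF i).toEquiv w, dd) :: inn) _
              (fun r' hr' => hIN r' (by omega)) ?_ hM hMj hdf
              (by simp at hcount ⊢; omega) (by intro h; exact absurd h (by simp)) ?_
          · intro p hp
            rcases List.mem_cons.1 hp with rfl | hp
            · refine Or.inr (Or.inr ⟨i, rfl, ((isoF i).toEquiv w, dd),
                List.mem_cons_self, ?_⟩)
              simp [uX]
            · exact descr_mono_inn isoF isoG isoG0 (hps p hp)
          · intro i₀' h
            obtain rfl : i = i₀' := Option.some.inj h
            exact ⟨r_i', sw_i - switchCost (some bb) true, true, true,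
              by omega, rfl, hdd2, Or.inl ⟨rfl, hPI.2⟩⟩
        · by_cases hmem : ∃ a ∈ M, a.1 = i
          · obtain ⟨a, ha, hai⟩ := hmem
            subst hai
            refine ⟨vReg isoG a.2 (hMj a ha) ((isoF a.1).toEquiv w), ?_⟩
            refine ih (sw - switchCost last true) (some true) M df inn _
              (fun r' hr' => hIN r' (by omega)) ?_ hM hMj hdf
              (by rcases df <;> simp at hcount ⊢ <;> omega) ?_ ?_
            · intro p hp
              rcases List.mem_cons.1 hp with rfl | hp
              · refine Or.inr (Or.inl ⟨a, ha, (isoF a.1).toEquiv w, hMj a ha, ?_⟩)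
                simp [uX]
              · exact hps p hp
            · intro h
              obtain ⟨h1, h2⟩ := hnone h
              exact ⟨h1, reserve_pres h2⟩
            · intro i₀ h
              obtain ⟨r_i, sw_i, aa, bb, hri, hlast, hgame, hP⟩ := hsome i₀ h
              subst hlast
              exact ⟨r_i, sw_i, true, bb, by omega, rfl, hgame, P_pres hcost hP⟩
          · obtain ⟨jfr, hjfr⟩ := exists_fresh (j₀ :: M.map Prod.snd)
              (by rcases df <;> simp at hcount ⊢ <;> omega)
            have hjfr0 : jfr ≠ j₀ := fun hc => hjfr (hc ▸ List.mem_cons_self)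
            refine ⟨vReg isoG jfr hjfr0 ((isoF i).toEquiv w), ?_⟩
            refine ih (sw - switchCost last true) (some true) ((i, jfr) :: M) df inn _
              (fun r' hr' => hIN r' (by omega)) ?_ ?_ ?_ ?_
              (by rcases df <;> simp at hcount ⊢ <;> omega) ?_ ?_
            · intro p hp
              rcases List.mem_cons.1 hp with rfl | hp
              · refine Or.inr (Or.inl ⟨(i, jfr), List.mem_cons_self,
                  (isoF i).toEquiv w, hjfr0, ?_⟩)
                simp [uX]
              · exact descr_mono_M isoF isoG isoG0 (hps p hp)
            · intro a ha b hb
              rcases List.mem_cons.1 ha with rfl | ha <;>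
                rcases List.mem_cons.1 hb with rfl | hb
              · simp
              · constructor
                · intro h1
                  exact absurd ⟨b, hb, h1.symm⟩ hmem
                · intro h2
                  refine absurd ?_ (fun hc => hjfr (List.mem_cons_of_mem _ hc))
                  rw [show jfr = b.2 from h2]
                  exact List.mem_map_of_mem (f := Prod.snd) hb
              · constructor
                · intro h1
                  exact absurd ⟨a, ha, h1⟩ hmem
                · intro h2
                  refine absurd ?_ (fun hc => hjfr (List.mem_cons_of_mem _ hc))
                  rw [show jfr = a.2 from h2.symm]
                  exact List.mem_map_of_mem (f := Prod.snd) ha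
              · exact hM a ha b hb
            · intro a ha
              rcases List.mem_cons.1 ha with rfl | ha
              · exact hjfr0
              · exact hMj a ha
            · intro i₀ h a ha
              rcases List.mem_cons.1 ha with rfl | ha
              · exact fun hc => hdd ⟨i₀, h, hc⟩
              · exact hdf i₀ h a ha
            · intro h
              obtain ⟨h1, h2⟩ := hnone h
              exact ⟨h1, reserve_pres h2⟩
            · intro i₀ h
              obtain ⟨r_i, sw_i, aa, bb, hri, hlast, hgame, hP⟩ := hsome i₀ h
              subst hlast
              exact ⟨r_i, sw_i, true, bb, by omega, rfl, hgame, P_pres hcost hP⟩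

end HangGame
section Final

/-- The trivial isomorphism associated to an equality of trees. -/
def isoOfEq : ∀ {S T : RTree}, S = T → TreeIso S T
  | _, _, rfl => ⟨Equiv.refl _, rfl, fun v => by cases _root_.id (RTree.parent _ v) <;> simp⟩

lemma single_rootChar : ∀ v, single.parent v = none ↔ v = single.root :=
  fun _ => ⟨fun _ => rfl, fun _ => rfl⟩

lemma hang_rootChar (n : ℕ) (f : Fin n → RTree) :
    ∀ v, (hang n f).parent v = none ↔ v = (hang n f).root := by
  intro v
  rcases v with ⟨⟩ | ⟨i, w⟩
  · exact ⟨fun _ => rfl, fun _ => rfl⟩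
  · constructor
    · rw [hang_parent_inr]
      rcases h : (f i).parent w with _ | w' <;> intro hc <;> exact nomatch hc
    · intro hcontra
      exact absurd hcontra (by simp [hang])

lemma treePair_rootChar (m : ℕ) (s : ℕ) :
    (∀ v, (TreePair m s).1.parent v = none ↔ v = (TreePair m s).1.root) ∧
    (∀ v, (TreePair m s).2.parent v = none ↔ v = (TreePair m s).2.root) := by
  cases s with
  | zero => exact ⟨single_rootChar, hang_rootChar m _⟩
  | succ t => exact ⟨hang_rootChar _ _, hang_rootChar _ _⟩

lemma main_zero (m : ℕ) : ∀ (r : ℕ)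
    (ps : List ((TreePair m 0).1.V × (TreePair m 0).2.V)),
    (∀ p ∈ ps, p = (PUnit.unit, Sum.inl ())) →
    DupWinsEHRAux (TreePair m 0).1 (TreePair m 0).2 r 0 (some true) ps := by
  intro r
  induction r with
  | zero =>
    intro ps hps p hp q hq
    rw [hps p hp, hps q hq]
    constructor
    · constructor <;> intro h <;> exact nomatch h
    · exact ⟨fun _ => rfl, fun _ => rfl⟩
  | succ r ih =>
    intro ps hps side hcost
    rcases side
    · simp [switchCost] at hcost
    · simp only [if_pos rfl]
      intro x
      refine ⟨Sum.inl (), ?_⟩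
      apply ih
      intro p hp
      rcases List.mem_cons.1 hp with rfl | hp
      · rfl
      · exact hps p hp

lemma main_t (m : ℕ) : ∀ (t : ℕ) (r : ℕ), r ≤ m →
    DupWinsEHRAux (TreePair m t).1 (TreePair m t).2 r t (some true)
      [((TreePair m t).1.root, (TreePair m t).2.root)] := by
  intro t
  induction t with
  | zero =>
    intro r _
    apply main_zero
    intro p hp
    rw [List.mem_singleton] at hp
    exact hp
  | succ t ih =>
    intro r hr
    show DupWinsEHRAux (hang (m+1) fun _ => (TreePair m t).2)
      (hang (m+1) fun i => if i.1 = m then (TreePair m t).1 else (TreePair m t).2)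
      r (t+1) (some true) _
    refine hang_main (j₀ := ⟨m, Nat.lt_succ_self m⟩)
      (fun _ => isoOfEq rfl)
      (fun j hj => isoOfEq (if_neg (fun hc => hj (Fin.ext hc))))
      (isoOfEq (if_pos rfl))
      (treePair_rootChar m t).2 (treePair_rootChar m t).1 t
      r (t+1) (some true) [] none [] _
      (fun r' hr' => dupWins_swap _ _ _ _ (ih r' (le_trans hr' hr)))
      ?_ (by simp) (by simp) (by intro i₀ h; exact nomatch h)
      (by simp; omega)
      (fun _ => ⟨rfl, by simp [switchCost]⟩)
      (by intro i₀ h; exact nomatch h)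
    intro p hp
    replace hp := List.mem_singleton.mp hp
    exact Or.inl hp

lemma dup_wins_final (s k m : ℕ) (hs : 1 ≤ s) (hk : 0 < k) (hm : s * k ≤ m) :
    DupWinsEHR (Tree1 s k m) (Tree2 s k m) (s - 1) k := by
  obtain ⟨t, rfl⟩ : ∃ t, s = t + 1 := ⟨s - 1, by omega⟩
  have hkm : k ≤ m := le_trans (by nlinarith) hm
  show DupWinsEHRAux (hang (m+1) fun _ => (TreePair m t).2)
      (hang (m+1) fun i => if i.1 = m then (TreePair m t).1 else (TreePair m t).2)
      k (t + 1 - 1) none _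
  refine hang_main (j₀ := ⟨m, Nat.lt_succ_self m⟩)
    (fun _ => isoOfEq rfl)
    (fun j hj => isoOfEq (if_neg (fun hc => hj (Fin.ext hc))))
    (isoOfEq (if_pos rfl))
    (treePair_rootChar m t).2 (treePair_rootChar m t).1 t
    k (t + 1 - 1) none [] none [] _
    (fun r' hr' => dupWins_swap _ _ _ _ (main_t m t r' (le_trans hr' hkm)))
    ?_ (by simp) (by simp) (by intro i₀ h; exact nomatch h)
    (by simp; omega)
    (fun _ => ⟨rfl, by simp [switchCost]⟩)
    (by intro i₀ h; exact nomatch h)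
  intro p hp
  replace hp := List.mem_singleton.mp hp
  exact Or.inl hp

end Final
/-- For every `s ≥ 2`, positive `k` and `m ≥ s·k`, every
first-order sentence of quantifier depth at most `k` and alternating
quantifier depth at most `s - 1` holds in `T₁^{(s,k,m)}` iff it holds in
`T₂^{(s,k,m)}`. -/
theorem trees_agree_on_low_sentences (s k m : ℕ) (hs : 2 ≤ s) (hk : 0 < k)
    (hm : s * k ≤ m) :
    ∀ A : FOFormula, A.IsSentence → A.qd ≤ k → A.aqd ≤ s - 1 →
      (Models (Tree1 s k m) A ↔ Models (Tree2 s k m) A) := by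
  intro A _ hqd haqd
  exact ehr_to_equiv (dup_wins_final s k m (by omega) hk hm) A hqd haqd
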